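/- Let f_1, ..., f_n be monomials in K[x_1,...,x_m] such that gcd(f_i, f_j) divides f_k for all i < j < k. Then for each i, the monomials f_1/gcd(f_1,f_i), ..., f_{i-1}/gcd(f_{i-1},f_i) are pairwise coprime, and hence form a regular sequence. -/

import Mathlib

open MvPolynomial

section aux

variable {σ : Type*} {R : Type*} [CommRing R] [IsDomain R] [DecidableEq σ]

private noncomputable def killX (i : σ) : MvPolynomial σ R →ₐ[R] MvPolynomial σ R :=
  aeval (fun j => if j = i then 0 else X j)

private lemma killX_monomial_of (i : σ) (d : σ →₀ ℕ) (c : R) (hd : d i = 0) :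
    killX i (monomial d c) = monomial d c := by
  rw [killX, aeval_monomial, monomial_eq]
  congr 1
  refine Finsupp.prod_congr (fun x hx => ?_)
  have : x ≠ i := fun hxi => by
    simp [hxi, hd, Finsupp.mem_support_iff] at hx
  simp [this]

private lemma X_dvd_iff_killX {i : σ} {f : MvPolynomial σ R} :
    X i ∣ f ↔ killX i f = 0 := by
  constructor
  · rintro ⟨g, rfl⟩
    simp [killX]
  · intro hf
    rw [X_dvd_iff_modMonomial_eq_zero]
    have hf' : f = X i * (f.divMonomial (Finsupp.single i 1))
        + f.modMonomial (Finsupp.single i 1) := by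
      rw [X, divMonomial_add_modMonomial]
    set r := f.modMonomial (Finsupp.single i 1) with hr
    have hkr : killX i r = r := by
      have : r = r.support.sum (fun d => monomial d (coeff d r)) :=
        (support_sum_monomial_coeff r).symm
      rw [this, map_sum]
      refine Finset.sum_congr rfl (fun d hd => ?_)
      refine killX_monomial_of i d _ ?_
      by_contra hdi
      have hle : Finsupp.single i 1 ≤ d := by
        rw [Finsupp.single_le_iff]; omega
      have := coeff_modMonomial_of_le (s' := d) (s := Finsupp.single i 1) f hle
      rw [← hr] at this
      exact (Finsupp.mem_support_iff.mp hd) this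
    have : killX i f = r := by
      rw [hf', map_add, map_mul, hkr]
      simp [killX]
    rw [← this, hf]

private lemma prime_X_mv (i : σ) : Prime (X i : MvPolynomial σ R) := by
  refine ⟨X_ne_zero i, ?_, ?_⟩
  · intro hu
    have := hu.map (killX (R := R) i)
    simp only [killX, aeval_X, if_pos rfl] at this
    exact not_isUnit_zero this
  · intro f g hfg
    rw [X_dvd_iff_killX, map_mul, mul_eq_zero] at hfg
    rcases hfg with hf | hg
    · exact Or.inl (X_dvd_iff_killX.mpr hf)
    · exact Or.inr (X_dvd_iff_killX.mpr hg)

end aux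

private lemma unit_of_dvd_coprime_monomials {K : Type*} [Field K] {m : ℕ}
    {d e : Fin m →₀ ℕ} (hde : ∀ x, d x = 0 ∨ e x = 0) {p : MvPolynomial (Fin m) K}
    (hd : p ∣ monomial d 1) (he : p ∣ monomial e 1) : IsUnit p := by
  by_contra hp
  have hp0 : p ≠ 0 := by
    rintro rfl
    rw [zero_dvd_iff] at hd
    exact one_ne_zero (monomial_eq_zero.mp hd)
  obtain ⟨q, hq, hqp⟩ := WfDvdMonoid.exists_irreducible_factor hp hp0
  have hqprime : Prime q := (UniqueFactorizationMonoid.irreducible_iff_prime).mp hq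
  have key : ∀ (c : Fin m →₀ ℕ), q ∣ monomial c (1 : K) → ∃ x, c x ≠ 0 ∧ X x ∣ q := by
    intro c hqc
    rw [← prod_X_pow_eq_monomial] at hqc
    obtain ⟨x, hx, hqx⟩ := hqprime.exists_mem_finset_dvd hqc
    have hqX : q ∣ X x := hqprime.dvd_of_dvd_pow hqx
    have hXq : X x ∣ q := by
      rcases hqX with ⟨u, hu⟩
      have hxirr : Irreducible (X x : MvPolynomial (Fin m) K) := (prime_X_mv x).irreducible
      rcases hxirr.isUnit_or_isUnit hu with h1 | h2
      · exact absurd h1 hq.not_isUnit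
      · obtain ⟨v, rfl⟩ := h2
        refine ⟨↑v⁻¹, ?_⟩
        rw [hu, mul_assoc, Units.mul_inv, mul_one]
    exact ⟨x, Finsupp.mem_support_iff.mp hx, hXq⟩
  obtain ⟨x, hx, hXx⟩ := key d (hqp.trans hd)
  obtain ⟨y, hy, _⟩ := key e (hqp.trans he)
  have hXe : X x ∣ monomial e (1 : K) := hXx.trans (hqp.trans he)
  rw [X_dvd_monomial] at hXe
  rcases hXe with h1 | h2
  · exact one_ne_zero h1
  · rcases hde x with h | h
    · exact hx h
    · exact h2 h

theorem stmt_2 {K : Type*} [Field K] {m n : ℕ} (a : Fin n → (Fin m →₀ ℕ))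
    (h : ∀ i j k : Fin n, i < j → j < k →
      (monomial (a i ⊓ a j) (1 : K)) ∣ monomial (a k) 1) :
    ∀ i j l : Fin n, j < i → l < i → j ≠ l →
      ∀ p : MvPolynomial (Fin m) K,
        p ∣ monomial (a j - a j ⊓ a i) 1 → p ∣ monomial (a l - a l ⊓ a i) 1 →
          IsUnit p := by
  intro i j l hji hli hjl p hpj hpl
  have hinf : a j ⊓ a l ≤ a i := by
    rcases lt_or_gt_of_ne hjl with hlt | hlt
    · have := h j l i hlt hli
      rw [monomial_one_dvd_monomial_one] at this
      exact this
    · have := h l j i hlt hji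
      rw [monomial_one_dvd_monomial_one] at this
      rwa [inf_comm] at this
  refine unit_of_dvd_coprime_monomials (d := a j - a j ⊓ a i) (e := a l - a l ⊓ a i)
    ?_ hpj hpl
  intro x
  have h1 : (a j) x ⊓ (a l) x ≤ (a i) x := by
    have := hinf x
    rwa [Finsupp.inf_apply] at this
  have h2 : (a j - a j ⊓ a i) x = (a j) x - (a j) x ⊓ (a i) x := by
    rw [Finsupp.tsub_apply, Finsupp.inf_apply]
  have h3 : (a l - a l ⊓ a i) x = (a l) x - (a l) x ⊓ (a i) x := by
    rw [Finsupp.tsub_apply, Finsupp.inf_apply]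
  rw [h2, h3]
  omega
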